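/- Let p ≠ 5 be an odd prime with p ≢ 1 (mod 5), and let M denote the number of tuples (x_1, x_2, x_3, x_4, x_5) ∈ F_p^5, not all zero, satisfying x_1^5 + x_2^5 + x_3^5 + x_4^5 + x_5^5 = 5·x_1x_2x_3x_4x_5 (so that the number of points on this quintic threefold in P^4(F_p) is M/(p−1)). Then, as complex numbers, M = (p−1)·(p^3 + p^2 + p + 1) + 1 + (1/p)·Σ_{χ ≠ ε} g(χ)^5·g((χ^5)^{−1})·(χ(−5))^5, where the sum runs over all nontrivial multiplicative characters χ of F_p. -/

import Mathlib

open Finset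

open scoped Classical

section QuinticAux

variable {p : ℕ} [Fact p.Prime] {s k : ℕ} (hsk : 5 * s = (p - 1) * k + 1)

lemma aux_addchar_map_sum {ι : Type*} (t : Finset ι) (θ : AddChar (ZMod p) ℂ)
    (g : ι → ZMod p) : θ (∑ i ∈ t, g i) = ∏ i ∈ t, θ (g i) := by
  classical
  induction t using Finset.induction with
  | empty => simp
  | insert a s h ih => rw [Finset.sum_insert h, Finset.prod_insert h, θ.map_add_eq_mul, ih]

include hsk in
lemma aux_pow_5s (x : ZMod p) : x ^ (5 * s) = x := by
  rcases eq_or_ne x 0 with rfl | hx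
  · rw [zero_pow]; omega
  · rw [hsk, pow_add, pow_mul, ZMod.pow_card_sub_one_eq_one hx, one_pow, pow_one, one_mul]

lemma aux_char_pow_card (χ : MulChar (ZMod p) ℂ) : χ ^ (p - 1) = 1 := by
  have := MulChar.pow_card_eq_one χ (M := ZMod p) (R := ℂ)
  rwa [ZMod.card_units p] at this

include hsk in
lemma aux_char_pow_5s (χ : MulChar (ZMod p) ℂ) : χ ^ (5 * s) = χ := by
  rw [hsk, pow_add, pow_mul, aux_char_pow_card, one_pow, pow_one, one_mul]

include hsk in
lemma aux_Phi_bij :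
    Function.Bijective (fun χ : MulChar (ZMod p) ℂ => (χ ^ 5)⁻¹) := by
  apply Function.bijective_iff_has_inverse.mpr
  refine ⟨fun χ => (χ⁻¹) ^ s, fun χ => ?_, fun χ => ?_⟩ <;>
      simp only [← inv_pow, inv_inv, ← pow_mul]
  · rw [aux_char_pow_5s hsk]
  · rw [mul_comm s 5, aux_char_pow_5s hsk]

lemma aux_sum_chars [Fintype (MulChar (ZMod p) ℂ)] (a : ZMod p) :
    ∑ χ : MulChar (ZMod p) ℂ, χ a = if a = 1 then ((p : ℂ) - 1) else 0 := by
  haveI : NeZero (((Monoid.exponent (ZMod p)ˣ) : ℕ) : ℂ) := by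
    refine ⟨?_⟩
    exact_mod_cast Nat.cast_ne_zero.mpr (Monoid.exponent_ne_zero_of_finite)
  have key := DirichletCharacter.sum_characters_eq (R := ℂ) (n := p) a
  rw [show (DirichletCharacter.fintype : Fintype (MulChar (ZMod p) ℂ))
      = ‹Fintype (MulChar (ZMod p) ℂ)› from Subsingleton.elim _ _] at key
  rw [key, Nat.totient_prime Fact.out]
  have h1 : 1 ≤ p := (Fact.out : p.Prime).one_lt.le
  rcases eq_or_ne a 1 with rfl | ha
  · simp [Nat.cast_sub h1]
  · simp [ha]

lemma aux_theta_expand [Fintype (MulChar (ZMod p) ℂ)] (θ : AddChar (ZMod p) ℂ)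
    {y : ZMod p} (hy : y ≠ 0) :
    ∑ χ : MulChar (ZMod p) ℂ, χ⁻¹ y * gaussSum χ θ = ((p : ℂ) - 1) * θ y := by
  have hyu : IsUnit y := isUnit_iff_ne_zero.mpr hy
  have hchi : ∀ x : ZMod p, ∑ χ : MulChar (ZMod p) ℂ, χ y⁻¹ * χ x
      = if y = x then ((p : ℂ) - 1) else 0 := by
    intro x
    simp_rw [← map_mul]
    rw [aux_sum_chars (y⁻¹ * x)]
    simp_rw [ZMod.inv_mul_eq_one_of_isUnit hyu]
  calc ∑ χ : MulChar (ZMod p) ℂ, χ⁻¹ y * gaussSum χ θ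
      = ∑ χ : MulChar (ZMod p) ℂ, ∑ x : ZMod p, χ y⁻¹ * χ x * θ x := by
        simp only [gaussSum, Finset.mul_sum, MulChar.inv_apply', mul_assoc]
    _ = ∑ x : ZMod p, (∑ χ : MulChar (ZMod p) ℂ, χ y⁻¹ * χ x) * θ x := by
        rw [Finset.sum_comm]; simp only [Finset.sum_mul]
    _ = ∑ x : ZMod p, (if y = x then ((p : ℂ) - 1) else 0) * θ x := by
        exact Finset.sum_congr rfl fun x _ => by rw [hchi x]
    _ = ((p : ℂ) - 1) * θ y := by simp [ite_mul]

include hsk in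
lemma aux_inner (θ : AddChar (ZMod p) ℂ) (ψ0 : MulChar (ZMod p) ℂ) {t : ZMod p} (ht : t ≠ 0) :
    ∑ y ∈ ({0}ᶜ : Finset (ZMod p)), ψ0 y * θ (t * y ^ 5)
      = (ψ0 ^ s) t⁻¹ * gaussSum (ψ0 ^ s) θ := by
  have hs0 : s ≠ 0 := by omega
  have step1 : ∑ y ∈ ({0}ᶜ : Finset (ZMod p)), ψ0 y * θ (t * y ^ 5)
      = ∑ z ∈ ({0}ᶜ : Finset (ZMod p)), (ψ0 ^ s) z * θ (t * z) := by
    refine Finset.sum_nbij' (fun y => y ^ 5) (fun z => z ^ s) ?_ ?_ ?_ ?_ ?_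
    · intro a ha
      simp only [Finset.mem_compl, Finset.mem_singleton] at ha ⊢
      exact pow_ne_zero _ ha
    · intro a ha
      simp only [Finset.mem_compl, Finset.mem_singleton] at ha ⊢
      exact pow_ne_zero _ ha
    · intro a _; show (a ^ 5) ^ s = a; rw [← pow_mul]; exact aux_pow_5s hsk a
    · intro a _; show (a ^ s) ^ 5 = a; rw [← pow_mul, mul_comm s 5]; exact aux_pow_5s hsk a
    · intro a _
      rw [MulChar.pow_apply' _ hs0, ← map_pow, ← pow_mul, aux_pow_5s hsk a]
  rw [step1]
  have step2 : ∑ z ∈ ({0}ᶜ : Finset (ZMod p)), (ψ0 ^ s) z * θ (t * z)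
      = gaussSum (ψ0 ^ s) (θ.mulShift t) := by
    rw [gaussSum]
    rw [← Finset.sum_compl_add_sum ({0} : Finset (ZMod p))]
    have hz : (ψ0 ^ s) (0 : ZMod p) = 0 :=
      (ψ0 ^ s).map_nonunit (by exact not_isUnit_zero)
    simp [AddChar.mulShift_apply, hz]
  rw [step2]
  have htu : IsUnit t := isUnit_iff_ne_zero.mpr ht
  have key := gaussSum_mulShift (ψ0 ^ s) θ htu.unit
  rw [IsUnit.unit_spec] at key
  have h1 : (ψ0 ^ s) t⁻¹ * ((ψ0 ^ s) t * gaussSum (ψ0 ^ s) (θ.mulShift t))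
      = (ψ0 ^ s) t⁻¹ * gaussSum (ψ0 ^ s) θ := by rw [key]
  rw [← mul_assoc, ← map_mul, inv_mul_cancel₀ ht, map_one, one_mul] at h1
  exact h1

include hsk in
lemma aux_key [Fintype (MulChar (ZMod p) ℂ)] (h5 : (5 : ZMod p) ≠ 0)
    (θ : AddChar (ZMod p) ℂ) {t : ZMod p} (ht : t ≠ 0) :
    ((p : ℂ) - 1) * ∑ x ∈ Fintype.piFinset (fun _ : Fin 5 => ({0}ᶜ : Finset (ZMod p))),
        θ (t * (∑ i, x i ^ 5 - 5 * ∏ i, x i))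
      = ∑ ψ : MulChar (ZMod p) ℂ,
          gaussSum ψ θ ^ 5 * gaussSum (ψ ^ 5)⁻¹ θ * (ψ (-5)) ^ 5 := by
  set B := Fintype.piFinset (fun _ : Fin 5 => ({0}ᶜ : Finset (ZMod p))) with hB
  have hBmem : ∀ x ∈ B, ∀ i, x i ≠ 0 := by
    intro x hx i
    have := Fintype.mem_piFinset.mp hx i
    simpa using this
  have hs0 : s ≠ 0 := by omega
  have hPne : ∀ x ∈ B, (∏ i, x i) ≠ 0 := fun x hx =>
    Finset.prod_ne_zero_iff.mpr fun i _ => hBmem x hx i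
  have h1 : ∀ x ∈ B, θ (t * (∑ i, x i ^ 5 - 5 * ∏ i, x i))
      = θ (-(5 * t * ∏ i, x i)) * ∏ i, θ (t * x i ^ 5) := by
    intro x _
    have e : t * (∑ i, x i ^ 5 - 5 * ∏ i, x i)
        = -(5 * t * ∏ i, x i) + ∑ i, t * x i ^ 5 := by
      rw [← Finset.mul_sum]; ring
    rw [e, θ.map_add_eq_mul, aux_addchar_map_sum]
  calc ((p : ℂ) - 1) * ∑ x ∈ B, θ (t * (∑ i, x i ^ 5 - 5 * ∏ i, x i))
      = ∑ x ∈ B, (((p : ℂ) - 1) * θ (-(5 * t * ∏ i, x i))) * ∏ i, θ (t * x i ^ 5) := by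
        rw [Finset.mul_sum]
        refine Finset.sum_congr rfl fun x hx => ?_
        rw [h1 x hx]; ring
    _ = ∑ x ∈ B, (∑ χ : MulChar (ZMod p) ℂ, χ⁻¹ (-(5 * t * ∏ i, x i)) * gaussSum χ θ)
          * ∏ i, θ (t * x i ^ 5) := by
        refine Finset.sum_congr rfl fun x hx => ?_
        rw [aux_theta_expand θ (neg_ne_zero.mpr (mul_ne_zero (mul_ne_zero h5 ht) (hPne x hx)))]
    _ = ∑ χ : MulChar (ZMod p) ℂ, gaussSum χ θ *
          (χ⁻¹ (-(5 * t)) * ∑ x ∈ B, ∏ i, (χ⁻¹ (x i) * θ (t * x i ^ 5))) := by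
        simp_rw [Finset.sum_mul]
        rw [Finset.sum_comm]
        refine Finset.sum_congr rfl fun χ _ => ?_
        rw [Finset.mul_sum, Finset.mul_sum]
        refine Finset.sum_congr rfl fun x hx => ?_
        have e : -(5 * t * ∏ i, x i) = (-(5 * t)) * ∏ i, x i := by ring
        rw [e, map_mul, map_prod, Finset.prod_mul_distrib]
        ring
    _ = ∑ χ : MulChar (ZMod p) ℂ, gaussSum χ θ *
          (χ⁻¹ (-(5 * t)) * (∑ y ∈ ({0}ᶜ : Finset (ZMod p)), χ⁻¹ y * θ (t * y ^ 5)) ^ 5) := by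
        refine Finset.sum_congr rfl fun χ _ => ?_
        rw [hB, Finset.sum_prod_piFinset ({0}ᶜ : Finset (ZMod p))
            (fun (_ : Fin 5) y => χ⁻¹ y * θ (t * y ^ 5)), Finset.prod_const,
          Finset.card_univ, Fintype.card_fin]
    _ = ∑ χ : MulChar (ZMod p) ℂ, gaussSum χ θ *
          (χ⁻¹ (-5) * gaussSum ((χ⁻¹) ^ s) θ ^ 5) := by
        refine Finset.sum_congr rfl fun χ _ => ?_
        rw [aux_inner hsk θ χ⁻¹ ht, mul_pow]
        have e1 : ((χ⁻¹ ^ s) t⁻¹) ^ 5 = χ⁻¹ t⁻¹ := by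
          rw [← MulChar.pow_apply' _ (by norm_num : (5:ℕ) ≠ 0), ← pow_mul, mul_comm s 5,
            aux_char_pow_5s hsk]
        have e2 : χ⁻¹ (-(5 * t)) = χ⁻¹ (-5) * χ⁻¹ t := by
          rw [show -(5 * t) = (-5 : ZMod p) * t by ring, map_mul]
        have e3 : χ⁻¹ t * χ⁻¹ t⁻¹ = 1 := by
          rw [← map_mul, mul_inv_cancel₀ ht, map_one]
        rw [e1, e2]
        linear_combination (gaussSum χ θ * χ⁻¹ (-5) * gaussSum (χ⁻¹ ^ s) θ ^ 5) * e3
    _ = ∑ ψ : MulChar (ZMod p) ℂ,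
          gaussSum ψ θ ^ 5 * gaussSum (ψ ^ 5)⁻¹ θ * (ψ (-5)) ^ 5 := by
        refine (Fintype.sum_bijective _ (aux_Phi_bij hsk) _ _ fun ψ => ?_).symm
        have e1 : ((ψ ^ 5)⁻¹)⁻¹ = ψ ^ 5 := inv_inv _
        have e2 : (ψ ^ 5) ^ s = ψ := by rw [← pow_mul, aux_char_pow_5s hsk]
        rw [e1, e2, MulChar.pow_apply' _ (by norm_num : (5:ℕ) ≠ 0)]
        ring

end QuinticAux

section MainAux

variable {p : ℕ} [Fact p.Prime]

lemma aux_five_ne_zero (hp5 : p ≠ 5) : (5 : ZMod p) ≠ 0 := by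
  intro h
  have h5 : ((5 : ℕ) : ZMod p) = 0 := by exact_mod_cast h
  have := (ZMod.natCast_eq_zero_iff 5 p).mp h5
  exact hp5 ((Nat.prime_dvd_prime_iff_eq Fact.out (by norm_num)).mp this)

lemma aux_coprime (hp : p % 5 ≠ 1) : Nat.Coprime 5 (p - 1) := by
  rw [Nat.Prime.coprime_iff_not_dvd (by norm_num)]
  intro ⟨m, hm⟩
  have hp2 : 2 ≤ p := (Fact.out : p.Prime).two_le
  apply hp; omega

lemma aux_gauss_one (θ : AddChar (ZMod p) ℂ) (hθ : θ ≠ 1) :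
    gaussSum (1 : MulChar (ZMod p) ℂ) θ = -1 := by
  rw [gaussSum, ← Finset.sum_compl_add_sum ({0} : Finset (ZMod p))]
  have hz : (1 : MulChar (ZMod p) ℂ) (0 : ZMod p) = 0 :=
    (1 : MulChar (ZMod p) ℂ).map_nonunit (by exact not_isUnit_zero)
  have h1 : ∑ y ∈ ({0}ᶜ : Finset (ZMod p)), (1 : MulChar (ZMod p) ℂ) y * θ y
      = ∑ y ∈ ({0}ᶜ : Finset (ZMod p)), θ y := by
    refine Finset.sum_congr rfl fun y hy => ?_
    have hy0 : y ≠ 0 := by simpa using hy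
    rw [MulChar.one_apply (isUnit_iff_ne_zero.mpr hy0), one_mul]
  rw [h1]
  have h2 : ∑ y ∈ ({0}ᶜ : Finset (ZMod p)), θ y + ∑ y ∈ ({0} : Finset (ZMod p)), θ y
      = ∑ y : ZMod p, θ y := Finset.sum_compl_add_sum _ _
  have h3 : ∑ y : ZMod p, θ y = 0 := AddChar.sum_eq_zero_of_ne_one hθ
  simp only [Finset.sum_singleton] at h2
  rw [Finset.sum_singleton, hz, zero_mul, add_zero]
  rw [h3, θ.map_zero_eq_one] at h2
  linear_combination h2

end MainAux

open scoped Classical in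
/-- For an odd prime `p ≠ 5` with `p ≢ 1 (mod 5)`, the number `M` of nonzero tuples in
`F_p⁵` on the quintic `x₁⁵+x₂⁵+x₃⁵+x₄⁵+x₅⁵ = 5x₁x₂x₃x₄x₅` satisfies
`M = (p-1)(p³ + p² + p + 1) + 1 + (1/p) Σ_{χ ≠ ε} g(χ)⁵ g((χ⁵)⁻¹) (χ(-5))⁵`. -/
theorem card_quintic_not_one_mod_five (p : ℕ) [Fact p.Prime] (hp5 : p ≠ 5) (hp2 : Odd p)
    (hp : p % 5 ≠ 1) [Fintype (MulChar (ZMod p) ℂ)]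
    (θ : AddChar (ZMod p) ℂ) (hθ : θ ≠ 1) :
    (Fintype.card {x : Fin 5 → ZMod p //
        x ≠ 0 ∧ ∑ i, (x i) ^ 5 = 5 * ∏ i, x i} : ℂ) =
      ((p : ℂ) - 1) * ((p : ℂ) ^ 3 + (p : ℂ) ^ 2 + (p : ℂ) + 1) + 1 +
        (1 / (p : ℂ)) *
          ∑ χ ∈ Finset.univ.filter (fun χ : MulChar (ZMod p) ℂ => χ ≠ 1),
            gaussSum χ θ ^ 5 * gaussSum (χ ^ 5)⁻¹ θ * (χ (-5)) ^ 5 := by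
  have hpp : p.Prime := Fact.out
  have hp3 : 3 ≤ p := by
    rcases hp2 with ⟨m, hm⟩; have := hpp.two_le; omega
  have hcop : Nat.Coprime 5 (p - 1) := aux_coprime hp
  obtain ⟨s, -, hs⟩ := Nat.exists_mul_mod_eq_one_of_coprime hcop (by omega)
  have hsk : 5 * s = (p - 1) * (5 * s / (p - 1)) + 1 := by
    have := Nat.div_add_mod (5 * s) (p - 1); omega
  have h5z : (5 : ZMod p) ≠ 0 := aux_five_ne_zero hp5
  have hθprim : θ.IsPrimitive := AddChar.IsPrimitive.of_ne_one hθ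
  have hp0 : (p : ℂ) ≠ 0 := Nat.cast_ne_zero.mpr hpp.ne_zero
  have hp1 : ((p : ℂ) - 1) ≠ 0 := sub_ne_zero.mpr (by exact_mod_cast hpp.one_lt.ne')
  have hcast : ((p - 1 : ℕ) : ℂ) = (p : ℂ) - 1 := by
    rw [Nat.cast_sub hpp.one_lt.le]; simp
  have hdelta : ∀ c : ZMod p, ∑ t : ZMod p, θ (t * c) = if c = 0 then (p : ℂ) else 0 := by
    intro c
    have := AddChar.sum_mulShift c hθprim
    rwa [ZMod.card p, Nat.cast_ite, Nat.cast_zero] at this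
  set SS : ℂ := ∑ χ ∈ Finset.univ.filter (fun χ : MulChar (ZMod p) ℂ => χ ≠ 1),
      gaussSum χ θ ^ 5 * gaussSum (χ ^ 5)⁻¹ θ * (χ (-5)) ^ 5 with hSS
  set B : Finset (Fin 5 → ZMod p) :=
    Fintype.piFinset (fun _ : Fin 5 => ({0}ᶜ : Finset (ZMod p))) with hB
  have hbij : Function.Bijective (fun y : ZMod p => y ^ 5) := by
    apply Function.bijective_iff_has_inverse.mpr
    refine ⟨fun z => z ^ s, fun y => ?_, fun z => ?_⟩
    · show (y ^ 5) ^ s = y; rw [← pow_mul]; exact aux_pow_5s hsk y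
    · show (z ^ s) ^ 5 = z; rw [← pow_mul, mul_comm s 5]; exact aux_pow_5s hsk z
  have hY : ∀ t : ZMod p, ∑ y : ZMod p, θ (t * y ^ 5) = if t = 0 then (p : ℂ) else 0 := by
    intro t
    have h1 : ∑ y : ZMod p, θ (t * y ^ 5) = ∑ z : ZMod p, θ (t * z) :=
      Fintype.sum_bijective _ hbij _ _ fun y => rfl
    have h2 : ∑ z : ZMod p, θ (t * z) = ∑ z : ZMod p, θ (z * t) := by
      simp_rw [mul_comm]
    rw [h1, h2]
    have := AddChar.sum_mulShift t hθprim
    rwa [ZMod.card p, Nat.cast_ite, Nat.cast_zero] at this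
  have hYc : ∀ t : ZMod p, ∑ y ∈ ({0}ᶜ : Finset (ZMod p)), θ (t * y ^ 5)
      = (if t = 0 then (p : ℂ) else 0) - 1 := by
    intro t
    have h1 : ∑ y ∈ ({0}ᶜ : Finset (ZMod p)), θ (t * y ^ 5)
        + ∑ y ∈ ({0} : Finset (ZMod p)), θ (t * y ^ 5)
        = ∑ y : ZMod p, θ (t * y ^ 5) := Finset.sum_compl_add_sum _ _
    rw [hY t] at h1
    simp only [Finset.sum_singleton] at h1
    have h0 : θ (t * (0 : ZMod p) ^ 5) = 1 := by
      rw [show t * (0 : ZMod p) ^ 5 = 0 by ring, θ.map_zero_eq_one]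
    rw [h0] at h1
    linear_combination h1
  -- Piece 1
  have hP1 : ∑ t : ZMod p, ∑ x : Fin 5 → ZMod p, θ (t * ∑ i, x i ^ 5) = (p : ℂ) ^ 5 := by
    have h1 : ∀ t : ZMod p, ∑ x : Fin 5 → ZMod p, θ (t * ∑ i, x i ^ 5)
        = (if t = 0 then (p : ℂ) else 0) ^ 5 := by
      intro t
      have e : ∀ x : Fin 5 → ZMod p, θ (t * ∑ i, x i ^ 5) = ∏ i, θ (t * x i ^ 5) := by
        intro x; rw [Finset.mul_sum, aux_addchar_map_sum]
      rw [Finset.sum_congr rfl fun x _ => e x, ← Fintype.piFinset_univ,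
        Finset.sum_prod_piFinset (univ : Finset (ZMod p)) (fun (_ : Fin 5) y => θ (t * y ^ 5)),
        Finset.prod_const, Finset.card_univ, Fintype.card_fin, hY t]
    rw [Finset.sum_congr rfl fun t _ => h1 t,
      Finset.sum_eq_single_of_mem (0 : ZMod p) (Finset.mem_univ _)
        (fun t _ ht => by simp [ht])]
    simp
  -- Piece 2
  have hP2 : ∑ t : ZMod p, ∑ x ∈ B, θ (t * ∑ i, x i ^ 5)
      = ((p : ℂ) - 1) ^ 5 - ((p : ℂ) - 1) := by
    have h1 : ∀ t : ZMod p, ∑ x ∈ B, θ (t * ∑ i, x i ^ 5)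
        = ((if t = 0 then (p : ℂ) else 0) - 1) ^ 5 := by
      intro t
      have e : ∀ x : Fin 5 → ZMod p, θ (t * ∑ i, x i ^ 5) = ∏ i, θ (t * x i ^ 5) := by
        intro x; rw [Finset.mul_sum, aux_addchar_map_sum]
      rw [Finset.sum_congr rfl fun x _ => e x, hB,
        Finset.sum_prod_piFinset (({0}ᶜ : Finset (ZMod p))) (fun (_ : Fin 5) y => θ (t * y ^ 5)),
        Finset.prod_const, Finset.card_univ, Fintype.card_fin, hYc t]
    rw [Finset.sum_congr rfl fun t _ => h1 t,
      ← Finset.sum_compl_add_sum ({0} : Finset (ZMod p))]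
    have h2 : ∀ t ∈ ({0}ᶜ : Finset (ZMod p)),
        ((if t = 0 then (p : ℂ) else 0) - 1) ^ 5 = -1 := by
      intro t ht
      have ht0 : t ≠ 0 := by simpa using ht
      rw [if_neg ht0]; norm_num
    rw [Finset.sum_congr rfl h2, Finset.sum_const, Finset.card_compl, Finset.card_singleton,
      ZMod.card, Finset.sum_singleton, if_pos rfl, nsmul_eq_mul, hcast]
    ring
  -- Piece 3
  have hT : (∑ ψ : MulChar (ZMod p) ℂ,
        gaussSum ψ θ ^ 5 * gaussSum (ψ ^ 5)⁻¹ θ * (ψ (-5)) ^ 5)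
      = 1 + SS := by
    rw [hSS, Finset.filter_ne', ← Finset.add_sum_erase _ _ (Finset.mem_univ (1 : MulChar (ZMod p) ℂ))]
    congr 1
    have hu : IsUnit (-5 : ZMod p) := isUnit_iff_ne_zero.mpr (neg_ne_zero.mpr h5z)
    rw [one_pow, inv_one, aux_gauss_one θ hθ, MulChar.one_apply hu]
    norm_num
  have hcardB : (B.card : ℂ) = ((p : ℂ) - 1) ^ 5 := by
    rw [hB, Fintype.card_piFinset]
    simp only [Finset.card_compl, Finset.card_singleton, ZMod.card]
    rw [Finset.prod_const, Finset.card_univ, Fintype.card_fin]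
    push_cast [hcast]
    ring
  have hP3 : ∑ t : ZMod p, ∑ x ∈ B, θ (t * (∑ i, x i ^ 5 - 5 * ∏ i, x i))
      = ((p : ℂ) - 1) ^ 5 + (1 + SS) := by
    rw [← Finset.sum_compl_add_sum ({0} : Finset (ZMod p))]
    have hzero : ∑ t ∈ ({0} : Finset (ZMod p)), ∑ x ∈ B,
        θ (t * (∑ i, x i ^ 5 - 5 * ∏ i, x i)) = ((p : ℂ) - 1) ^ 5 := by
      rw [Finset.sum_singleton]
      have : ∀ x ∈ B, θ ((0 : ZMod p) * (∑ i, x i ^ 5 - 5 * ∏ i, x i)) = 1 := by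
        intro x _; rw [zero_mul, θ.map_zero_eq_one]
      rw [Finset.sum_congr rfl this, Finset.sum_const, nsmul_eq_mul, mul_one, hcardB]
    have hWT : ((p : ℂ) - 1) * ∑ t ∈ ({0}ᶜ : Finset (ZMod p)), ∑ x ∈ B,
        θ (t * (∑ i, x i ^ 5 - 5 * ∏ i, x i))
        = ((p : ℂ) - 1) * ∑ ψ : MulChar (ZMod p) ℂ,
            gaussSum ψ θ ^ 5 * gaussSum (ψ ^ 5)⁻¹ θ * (ψ (-5)) ^ 5 := by
      rw [Finset.mul_sum,
        Finset.sum_congr rfl fun t ht => aux_key hsk h5z θ (by simpa using ht),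
        Finset.sum_const, Finset.card_compl, Finset.card_singleton, ZMod.card,
        nsmul_eq_mul, hcast]
    have hW := mul_left_cancel₀ hp1 hWT
    rw [hW, hzero, hT]
    ring
  -- counting
  have hcount : (p : ℂ) *
      (((univ.filter fun x : Fin 5 → ZMod p => ∑ i, x i ^ 5 = 5 * ∏ i, x i).card : ℕ) : ℂ)
      = ∑ x : Fin 5 → ZMod p, ∑ t : ZMod p, θ (t * (∑ i, x i ^ 5 - 5 * ∏ i, x i)) := by
    have e : ∀ x : Fin 5 → ZMod p, ∑ t : ZMod p, θ (t * (∑ i, x i ^ 5 - 5 * ∏ i, x i))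
        = if (∑ i, x i ^ 5 = 5 * ∏ i, x i) then (p : ℂ) else 0 := by
      intro x
      rw [hdelta]
      simp only [sub_eq_zero]
    rw [Finset.sum_congr rfl fun x _ => e x, ← Finset.sum_filter, Finset.sum_const,
      nsmul_eq_mul, mul_comm]
  have hsplit : ∀ t : ZMod p, ∑ x : Fin 5 → ZMod p, θ (t * (∑ i, x i ^ 5 - 5 * ∏ i, x i))
      = (∑ x : Fin 5 → ZMod p, θ (t * ∑ i, x i ^ 5))
        - (∑ x ∈ B, θ (t * ∑ i, x i ^ 5))
        + ∑ x ∈ B, θ (t * (∑ i, x i ^ 5 - 5 * ∏ i, x i)) := by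
    intro t
    have h0 : ∑ x ∈ Bᶜ, θ (t * (∑ i, x i ^ 5 - 5 * ∏ i, x i))
        + ∑ x ∈ B, θ (t * (∑ i, x i ^ 5 - 5 * ∏ i, x i))
        = ∑ x : Fin 5 → ZMod p, θ (t * (∑ i, x i ^ 5 - 5 * ∏ i, x i)) :=
      Finset.sum_compl_add_sum _ _
    have h2 : ∑ x ∈ Bᶜ, θ (t * (∑ i, x i ^ 5 - 5 * ∏ i, x i))
        = ∑ x ∈ Bᶜ, θ (t * ∑ i, x i ^ 5) := by
      refine Finset.sum_congr rfl fun x hx => ?_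
      have hx' : ¬ ∀ i, x i ∈ ({0}ᶜ : Finset (ZMod p)) := by
        intro hall
        exact (Finset.mem_compl.mp hx) (by rw [hB]; exact Fintype.mem_piFinset.mpr hall)
      push_neg at hx'
      obtain ⟨i, hi⟩ := hx'
      have hi0 : x i = 0 := by simpa using hi
      have hprod : ∏ i, x i = 0 := Finset.prod_eq_zero (Finset.mem_univ i) hi0
      rw [show t * (∑ i, x i ^ 5 - 5 * ∏ i, x i) = t * ∑ i, x i ^ 5 by rw [hprod]; ring]
    have h3 : ∑ x ∈ Bᶜ, θ (t * ∑ i, x i ^ 5) + ∑ x ∈ B, θ (t * ∑ i, x i ^ 5)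
        = ∑ x : Fin 5 → ZMod p, θ (t * ∑ i, x i ^ 5) := Finset.sum_compl_add_sum _ _
    linear_combination - h0 + h2 + h3
  have hmain : (p : ℂ) *
      (((univ.filter fun x : Fin 5 → ZMod p => ∑ i, x i ^ 5 = 5 * ∏ i, x i).card : ℕ) : ℂ)
      = (p : ℂ) ^ 5 + (p : ℂ) + SS := by
    rw [hcount, Finset.sum_comm, Finset.sum_congr rfl fun t _ => hsplit t,
      Finset.sum_add_distrib, Finset.sum_sub_distrib, hP1, hP2, hP3]
    ring
  -- subtype cardinality
  have h0mem : (0 : Fin 5 → ZMod p) ∈ univ.filter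
      (fun x : Fin 5 → ZMod p => ∑ i, x i ^ 5 = 5 * ∏ i, x i) := by
    simp
  have hcards : (Fintype.card {x : Fin 5 → ZMod p //
      x ≠ 0 ∧ ∑ i, (x i) ^ 5 = 5 * ∏ i, x i} : ℂ)
      = (((univ.filter fun x : Fin 5 → ZMod p =>
          ∑ i, x i ^ 5 = 5 * ∏ i, x i).card : ℕ) : ℂ) - 1 := by
    rw [Fintype.card_subtype]
    have heq : univ.filter (fun x : Fin 5 → ZMod p => x ≠ 0 ∧ ∑ i, x i ^ 5 = 5 * ∏ i, x i)
        = (univ.filter fun x : Fin 5 → ZMod p => ∑ i, x i ^ 5 = 5 * ∏ i, x i).erase 0 := by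
      ext x
      simp [Finset.mem_erase, and_comm]
    rw [heq, Finset.card_erase_of_mem h0mem]
    have hle : 1 ≤ (univ.filter fun x : Fin 5 → ZMod p =>
        ∑ i, x i ^ 5 = 5 * ∏ i, x i).card := Finset.card_pos.mpr ⟨0, h0mem⟩
    rw [Nat.cast_sub hle]
    simp
  rw [hcards]
  have e : (1 / (p : ℂ)) * SS
      = (((univ.filter fun x : Fin 5 → ZMod p =>
          ∑ i, x i ^ 5 = 5 * ∏ i, x i).card : ℕ) : ℂ) - (p : ℂ) ^ 4 - 1 := by
    field_simp
    linear_combination - hmain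
  linear_combination - e
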